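/- Let H be a split graph whose vertex set is partitioned into an independent set S (taken inclusion-wise maximal) and a clique C. Then for every minimal dominating set D of H: (i) D ∩ S = S \ N(D ∩ C), and (ii) every x ∈ D has a private neighbor in S. -/
import Mathlib


open Set

variable {V : Type*}

/-- The closed neighborhood of a set of vertices: `N[X]`. -/
def closedNbhd (G : SimpleGraph V) (X : Set V) : Set V :=
  {y | ∃ x ∈ X, y = x ∨ G.Adj x y}

/-- `X` dominates `A` in `G`: `A ⊆ N[X]`. -/
def Dominates (G : SimpleGraph V) (X A : Set V) : Prop :=
  A ⊆ closedNbhd G X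

/-- `X` is an inclusion-wise minimal set dominating `A` in `G`. -/
def MinDom (G : SimpleGraph V) (X A : Set V) : Prop :=
  Dominates G X A ∧ ∀ Y, Y ⊂ X → ¬ Dominates G Y A

/-- `S` is an independent set in `G`. -/
def IndepSet (G : SimpleGraph V) (S : Set V) : Prop :=
  S.Pairwise fun x y => ¬ G.Adj x y

theorem stmt_6 [Fintype V] (H : SimpleGraph V) (S C : Set V)
    (hpart : S ∪ C = Set.univ) (hdisj : Disjoint S C)
    (hS : IndepSet H S) (hSmax : ∀ T, S ⊆ T → IndepSet H T → T = S)
    (hC : H.IsClique C)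
    (D : Set V) (hD : MinDom H D Set.univ) :
    D ∩ S = S \ {y | ∃ x ∈ D ∩ C, H.Adj x y} ∧
      ∀ x ∈ D, ∃ y ∈ S, y ∈ closedNbhd H {x} ∧ y ∉ closedNbhd H (D \ {x}) := by
  obtain ⟨hDdom, hDmin⟩ := hD
  have hdom : ∀ v : V, ∃ d ∈ D, v = d ∨ H.Adj d v := fun v => hDdom (mem_univ v)
  have hSC : ∀ v : V, v ∈ S ∨ v ∈ C := fun v => by
    have : v ∈ S ∪ C := hpart.symm ▸ mem_univ v
    exact this
  -- every x ∈ D has a "private" vertex w ∈ N[x] \ N[D\{x}]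
  have key : ∀ x ∈ D, ∃ w, (w = x ∨ H.Adj x w) ∧ w ∉ closedNbhd H (D \ {x}) := by
    intro x hx
    have hss : D \ {x} ⊂ D := by
      constructor
      · exact diff_subset
      · intro hsub
        exact (hsub hx).2 rfl
    have hnd := hDmin _ hss
    rw [Dominates, not_subset] at hnd
    obtain ⟨w, -, hw⟩ := hnd
    obtain ⟨d, hd, hdw⟩ := hdom w
    have hdx : d = x := by
      by_contra h
      exact hw ⟨d, ⟨hd, h⟩, hdw⟩
    exact ⟨w, hdx ▸ hdw, hw⟩
  constructor
  · ext v
    simp only [mem_inter_iff, mem_diff, mem_setOf_eq]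
    constructor
    · rintro ⟨hvD, hvS⟩
      refine ⟨hvS, ?_⟩
      rintro ⟨x, ⟨hxD, hxC⟩, hadj⟩
      have hxv : x ≠ v := fun h => hdisj.ne_of_mem hvS hxC h.symm
      obtain ⟨w, hwv, hw⟩ := key v hvD
      rcases hwv with rfl | hvw
      · -- w = v is dominated by x ∈ D \ {v}
        exact hw ⟨x, ⟨hxD, hxv⟩, Or.inr hadj⟩
      · -- v adj w, so w ∈ C, so x dominates w
        have hwC : w ∈ C := by
          rcases hSC w with hwS | hwC
          · exact absurd hvw (hS hvS hwS (fun h => H.irrefl (h ▸ hvw)))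
          · exact hwC
        rcases eq_or_ne x w with rfl | hxw
        · exact hw ⟨x, ⟨hxD, hxv⟩, Or.inl rfl⟩
        · exact hw ⟨x, ⟨hxD, hxv⟩, Or.inr (hC hxC hwC hxw)⟩
    · rintro ⟨hvS, hno⟩
      refine ⟨?_, hvS⟩
      obtain ⟨d, hdD, hdv⟩ := hdom v
      rcases hdv with rfl | hadj
      · exact hdD
      · rcases hSC d with hdS | hdC
        · have hdv : d ≠ v := fun h => H.irrefl (h ▸ hadj)
          exact absurd hadj (hS hdS hvS hdv)
        · exact absurd ⟨d, ⟨hdD, hdC⟩, hadj⟩ hno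
  · intro x hx
    obtain ⟨w, hwx, hw⟩ := key x hx
    rcases hSC w with hwS | hwC
    · exact ⟨w, hwS, ⟨x, rfl, hwx⟩, hw⟩
    · -- w ∈ C: by maximality of S, w has a neighbor s ∈ S
      have hwnS : w ∉ S := fun h => hdisj.ne_of_mem h hwC rfl
      have hs : ∃ s ∈ S, H.Adj w s := by
        by_contra hns
        push_neg at hns
        have hind : IndepSet H (insert w S) := by
          rw [IndepSet, pairwise_insert]
          refine ⟨hS, fun b hb _ => ⟨hns b hb, fun h => hns b hb h.symm⟩⟩
        have := hSmax _ (subset_insert w S) hind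
        exact hwnS (this ▸ mem_insert w S)
      obtain ⟨s, hsS, hws⟩ := hs
      obtain ⟨d, hdD, hds⟩ := hdom s
      -- helper: any d' ∈ D ∩ C must equal x (else it dominates w)
      have hCx : ∀ d' ∈ D, d' ∈ C → d' = x := by
        intro d' hd'D hd'C
        by_contra h
        rcases eq_or_ne d' w with rfl | hne
        · exact hw ⟨d', ⟨hd'D, h⟩, Or.inl rfl⟩
        · exact hw ⟨d', ⟨hd'D, h⟩, Or.inr (hC hd'C hwC hne)⟩
      rcases hds with rfl | hadj
      · -- s ∈ D; s adj w so if s ≠ x then w dominated by D \ {x}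
        have hsx : s = x := by
          by_contra h
          exact hw ⟨s, ⟨hdD, h⟩, Or.inr hws.symm⟩
        subst hsx
        -- x ∈ S is its own private neighbor
        refine ⟨s, hsS, ⟨s, rfl, Or.inl rfl⟩, ?_⟩
        rintro ⟨d', ⟨hd'D, hd'x⟩, hd'⟩
        rcases hd' with rfl | hadj'
        · exact hd'x rfl
        · rcases hSC d' with hd'S | hd'C
          · have : d' ≠ s := fun h => H.irrefl (h ▸ hadj')
            exact hS hd'S hsS this hadj'
          · exact hd'x (hCx d' hd'D hd'C)
      · -- d adj s with s ∈ S, so d ∈ C, so d = x; s is private for x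
        have hdC : d ∈ C := by
          rcases hSC d with hdS | hdC
          · have : d ≠ s := fun h => H.irrefl (h ▸ hadj)
            exact absurd hadj (hS hdS hsS this)
          · exact hdC
        have hdx : d = x := hCx d hdD hdC
        subst hdx
        refine ⟨s, hsS, ⟨d, rfl, Or.inr hadj⟩, ?_⟩
        rintro ⟨d', ⟨hd'D, hd'x⟩, hd'⟩
        rcases hd' with rfl | hadj'
        · -- s ∈ D, s ≠ x, s adj w: dominates w
          exact hw ⟨s, ⟨hd'D, hd'x⟩, Or.inr hws.symm⟩
        · rcases hSC d' with hd'S | hd'C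
          · have : d' ≠ s := fun h => H.irrefl (h ▸ hadj')
            exact hS hd'S hsS this hadj'
          · exact hd'x (hCx d' hd'D hd'C)
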